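/- arXiv:2506.12002 — 2 statements merged into one kernel-verified Lean document; each statement's English description precedes it below -/
import Mathlib

section
/- Cauchy's theorem for group manifolds: if f is holomorphic on a domain D in G^ℂ and Σ, Σ′ are oriented real N-dimensional submanifolds of D with common boundary bounding a region R (∂R = Σ′ − Σ), then ∫_Σ (dU) f(U) = ∫_{Σ′} (dU) f(U). -/
section Aux

variable {N : ℕ} {Ω : Type*} [Ring Ω]

lemma aux_mem_zero (θ : Fin N → Ω)
    (hanti : ∀ a b, θ a * θ b = -(θ b * θ a))
    (hsq : ∀ a, θ a * θ a = 0) :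
    ∀ (l : List (Fin N)) (a : Fin N), a ∈ l → θ a * (l.map θ).prod = 0 := by
  intro l
  induction l with
  | nil => simp
  | cons b t ih =>
    intro a ha
    rcases List.mem_cons.mp ha with h | h
    · subst h
      simp [List.map_cons, List.prod_cons, ← mul_assoc, hsq a]
    · have : θ a * (θ b * (t.map θ).prod) = -(θ b * (θ a * (t.map θ).prod)) := by
        rw [← mul_assoc, hanti a b, neg_mul, mul_assoc]
      simp [List.map_cons, List.prod_cons, this, ih a h]

lemma aux_dup_zero (θ : Fin N → Ω)
    (hanti : ∀ a b, θ a * θ b = -(θ b * θ a))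
    (hsq : ∀ a, θ a * θ a = 0) :
    ∀ (l : List (Fin N)), ¬ l.Nodup → (l.map θ).prod = 0 := by
  intro l
  induction l with
  | nil => intro h; exact absurd List.nodup_nil h
  | cons b t ih =>
    intro h
    rw [List.nodup_cons] at h
    push_neg at h
    simp only [List.map_cons, List.prod_cons]
    by_cases hb : b ∈ t
    · exact aux_mem_zero θ hanti hsq t b hb
    · rw [ih (h hb), mul_zero]

end Aux

/-- Cauchy's theorem for group manifolds: if `f` is holomorphic on a domain in
`G^ℂ` and `S'`, `S` are oriented real `N`-dimensional submanifolds with common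
boundary bounding a region `R` (`∂R = S' − S`), then
`∫_{S'} (dU) f = ∫_{S} (dU) f`.  The differential-geometric data is modelled
abstractly: `Ω` is the `ℂ`-algebra of forms, with anticommuting square-zero
one-forms `θ a`, a linear exterior derivative `d` obeying the Maurer–Cartan
equation and Leibniz rule, a "function" (zero-form) `f` with
`d f = θ^a (D_a f)` for zero-forms `Df a` commuting with the `θ`'s, linear
integration maps over surfaces and regions, and Stokes' theorem relating them
through the boundary relation `bdry R S' S` (meaning `∂R = S' − S`). -/
theorem stmt5 {N : ℕ} {Ω : Type*} [Ring Ω] [Algebra ℂ Ω]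
    {Surf Reg : Type*}
    (θ : Fin N → Ω) (C : Fin N → Fin N → Fin N → ℝ)
    (hanti : ∀ a b, θ a * θ b = -(θ b * θ a))
    (hsq : ∀ a, θ a * θ a = 0)
    (d : Ω →ₗ[ℂ] Ω)
    (hone : d 1 = 0)
    (hdθ : ∀ a, d (θ a) = (1/2 : ℂ) • ∑ b, ∑ c, (C b c a : ℂ) • (θ b * θ c))
    (hLeib : ∀ a y, d (θ a * y) = d (θ a) * y - θ a * d y)
    (f : Ω) (Df : Fin N → Ω)
    (hdf : d f = ∑ a, θ a * Df a)
    (hDfcomm : ∀ a b, θ a * Df b = Df b * θ a)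
    (hLeibN : d ((List.ofFn θ).prod * f)
      = d ((List.ofFn θ).prod) * f + ((-1 : ℂ) ^ N) • ((List.ofFn θ).prod * d f))
    (IntS : Surf → Ω →ₗ[ℂ] ℂ) (IntR : Reg → Ω →ₗ[ℂ] ℂ)
    (bdry : Reg → Surf → Surf → Prop)
    (hStokes : ∀ R S' S, bdry R S' S → ∀ ω : Ω, IntS S' ω - IntS S ω = IntR R (d ω)) :
    ∀ R S' S, bdry R S' S →
      IntS S' ((List.ofFn θ).prod * f) = IntS S ((List.ofFn θ).prod * f) := by
  -- key lemma: if every index appears in l or m, then Pm * d(Pl) = 0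
  have key : ∀ (l m : List (Fin N)), (∀ a : Fin N, a ∈ l ∨ a ∈ m) →
      ((m.map θ).prod) * d ((l.map θ).prod) = 0 := by
    intro l
    induction l with
    | nil => intro m _; simp [hone]
    | cons a t ih =>
      intro m hcov
      simp only [List.map_cons, List.prod_cons]
      rw [hLeib a, mul_sub]
      have h2 : (m.map θ).prod * (θ a * d ((t.map θ).prod)) = 0 := by
        have := ih (m ++ [a]) (by
          intro x
          rcases hcov x with hx | hx
          · rcases List.mem_cons.mp hx with h | h
            · right; simp [h]
            · left; exact h
          · right; simp [hx])
        simpa [List.map_append, List.prod_append, mul_assoc] using this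
      have h1 : (m.map θ).prod * (d (θ a) * (t.map θ).prod) = 0 := by
        rw [hdθ a]
        rw [smul_mul_assoc, mul_smul_comm, Finset.sum_mul, Finset.mul_sum]
        have hz : ∀ b ∈ Finset.univ, (m.map θ).prod *
            ((∑ c, (C b c a : ℂ) • (θ b * θ c)) * (t.map θ).prod) = 0 := by
          intro b _
          rw [Finset.sum_mul, Finset.mul_sum]
          refine Finset.sum_eq_zero ?_
          intro c _
          rw [smul_mul_assoc, mul_smul_comm]
          rcases eq_or_ne b c with hbc | hbc
          · subst hbc; simp [hsq b]
          · have hprod : (m.map θ).prod * (θ b * θ c * (t.map θ).prod)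
                = ((m ++ b :: c :: t).map θ).prod := by
              simp [List.map_append, List.prod_append, List.map_cons,
                List.prod_cons, mul_assoc]
            rw [hprod, aux_dup_zero θ hanti hsq, smul_zero]
            -- show the list has a duplicate
            intro hnd
            have hb : b ∈ m ∨ b ∈ t ∨ b = a := by
              rcases hcov b with hx | hx
              · rcases List.mem_cons.mp hx with h | h
                · right; right; exact h
                · right; left; exact h
              · left; exact hx
            have hc : c ∈ m ∨ c ∈ t ∨ c = a := by
              rcases hcov c with hx | hx
              · rcases List.mem_cons.mp hx with h | h
                · right; right; exact h
                · right; left; exact h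
              · left; exact hx
            rw [List.nodup_append] at hnd
            obtain ⟨hm, hbct, hdisj⟩ := hnd
            rw [List.nodup_cons] at hbct
            obtain ⟨hbn, hct⟩ := hbct
            rw [List.nodup_cons] at hct
            obtain ⟨hcn, _⟩ := hct
            rcases hb with hb | hb | hb
            · exact hdisj b hb b (by simp) rfl
            · exact hbn (by simp [hb])
            · rcases hc with hc | hc | hc
              · exact hdisj c hc c (by simp) rfl
              · exact hcn hc
              · exact hbc (hb.trans hc.symm)
        rw [Finset.sum_congr rfl hz]
        simp
      rw [h1, h2, sub_zero]
  have hdtop : d ((List.ofFn θ).prod) = 0 := by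
    have := key (List.finRange N) [] (by simp)
    simpa [List.ofFn_eq_map] using this
  have htopθ : ∀ a : Fin N, (List.ofFn θ).prod * θ a = 0 := by
    intro a
    have : (List.ofFn θ).prod * θ a = (((List.finRange N) ++ [a]).map θ).prod := by
      simp [List.ofFn_eq_map, List.map_append, List.prod_append]
    rw [this, aux_dup_zero θ hanti hsq]
    intro hnd
    rw [List.nodup_append] at hnd
    exact hnd.2.2 a (List.mem_finRange a) a (by simp) rfl
  have hdzero : d ((List.ofFn θ).prod * f) = 0 := by
    rw [hLeibN, hdtop, zero_mul, zero_add, hdf, Finset.mul_sum]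
    have : ∀ a ∈ Finset.univ, (List.ofFn θ).prod * (θ a * Df a) = 0 := by
      intro a _
      rw [← mul_assoc, htopθ a, zero_mul]
    rw [Finset.sum_congr rfl this]
    simp
  intro R S' S hb
  have := hStokes R S' S hb ((List.ofFn θ).prod * f)
  rw [hdzero, map_zero] at this
  exact sub_eq_zero.mp this
end

section
/- If a tangent vector v evolves by v̇ = (Hv)† + [ξ, v] and a normal vector n evolves by ṅ = −(H^T n)† − [ξ†, n], then d/dt (tr n† v) = −2i Im tr(n (Hv)), which is purely imaginary; consequently ⟨n, v⟩ := Re tr(n† v) is constant along the flow, so ⟨n₀, v₀⟩ = 0 implies ⟨n, v⟩ = 0 for all times. -/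
open Matrix

attribute [local instance] Matrix.normedAddCommGroup Matrix.normedSpace

namespace Stmt7Aux

variable {m : ℕ}

/-- Entry extraction as a continuous ℝ-linear map. -/
noncomputable def E (i j : Fin m) : Matrix (Fin m) (Fin m) ℂ →L[ℝ] ℂ :=
  LinearMap.toContinuousLinearMap
    { toFun := fun A => A i j
      map_add' := fun _ _ => rfl
      map_smul' := fun _ _ => rfl }

@[simp] lemma E_apply (i j : Fin m) (A : Matrix (Fin m) (Fin m) ℂ) : E i j A = A i j := rfl

lemma traceForm (a b : Matrix (Fin m) (Fin m) ℂ) :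
    Matrix.trace (aᴴ * b) = ∑ j, ∑ i, star (a i j) * b i j := by
  simp [Matrix.trace, Matrix.mul_apply, Matrix.diag, Matrix.conjTranspose_apply]

lemma star_sub_self (z : ℂ) : star z - z = -(2 * Complex.I * (z.im : ℂ)) := by
  apply Complex.ext <;> simp [Complex.ext_iff] <;> ring

end Stmt7Aux

/-- If a tangent vector evolves by `v̇ = (Hv)† + [ξ, v]` and a normal vector by
`ṅ = -(H^T n)† - [ξ†, n]`, where `H`, `Hᵀ` are ℝ-linear maps related by
`tr((H^T a) b) = tr(a (H b))`, then
`d/dt tr(n† v) = -2i Im tr(n (Hv))` (purely imaginary), so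
`⟨n, v⟩ = Re tr(n† v)` is constant along the flow: `⟨n₀, v₀⟩ = 0` implies
`⟨n, v⟩ = 0` for all times. -/
theorem stmt7 {m : ℕ}
    (H HT : Matrix (Fin m) (Fin m) ℂ →ₗ[ℝ] Matrix (Fin m) (Fin m) ℂ)
    (htrans : ∀ a b, Matrix.trace (HT a * b) = Matrix.trace (a * H b))
    (ξ : Matrix (Fin m) (Fin m) ℂ)
    (v nv : ℝ → Matrix (Fin m) (Fin m) ℂ)
    (hv : ∀ t, HasDerivAt v ((H (v t))ᴴ + (ξ * v t - v t * ξ)) t)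
    (hn : ∀ t, HasDerivAt nv (-(HT (nv t))ᴴ - (ξᴴ * nv t - nv t * ξᴴ)) t) :
    (∀ t, HasDerivAt (fun t => Matrix.trace ((nv t)ᴴ * v t))
        (-(2 * Complex.I * ((Matrix.trace (nv t * H (v t))).im : ℂ))) t) ∧
    ((Matrix.trace ((nv 0)ᴴ * v 0)).re = 0 →
      ∀ t, (Matrix.trace ((nv t)ᴴ * v t)).re = 0) := by
  have key : ∀ t, HasDerivAt (fun t => Matrix.trace ((nv t)ᴴ * v t))
      (Matrix.trace ((-(HT (nv t))ᴴ - (ξᴴ * nv t - nv t * ξᴴ))ᴴ * v t)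
        + Matrix.trace ((nv t)ᴴ * ((H (v t))ᴴ + (ξ * v t - v t * ξ)))) t := by
    intro t
    set n' := -(HT (nv t))ᴴ - (ξᴴ * nv t - nv t * ξᴴ) with hn'
    set v' := (H (v t))ᴴ + (ξ * v t - v t * ξ) with hv'
    have hvij : ∀ i j, HasDerivAt (fun t => v t i j) (v' i j) t := fun i j =>
      (Stmt7Aux.E i j).hasFDerivAt.comp_hasDerivAt t (hv t)
    have hnij : ∀ i j, HasDerivAt (fun t => nv t i j) (n' i j) t := fun i j =>
      (Stmt7Aux.E i j).hasFDerivAt.comp_hasDerivAt t (hn t)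
    have hsum : HasDerivAt (fun t => ∑ j, ∑ i, star (nv t i j) * v t i j)
        (∑ j, ∑ i, (star (n' i j) * v t i j + star (nv t i j) * v' i j)) t := by
      refine HasDerivAt.fun_sum fun j _ => HasDerivAt.fun_sum fun i _ => ?_
      exact (hnij i j).star.mul (hvij i j)
    have e1 : (fun t => ∑ j, ∑ i, star (nv t i j) * v t i j)
        = fun t => Matrix.trace ((nv t)ᴴ * v t) := by
      funext s; rw [Stmt7Aux.traceForm]
    rw [e1] at hsum
    convert hsum using 1
    rw [Stmt7Aux.traceForm, Stmt7Aux.traceForm]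
    rw [← Finset.sum_add_distrib]
    refine Finset.sum_congr rfl fun j _ => ?_
    rw [← Finset.sum_add_distrib]
  have heq : ∀ t, (Matrix.trace ((-(HT (nv t))ᴴ - (ξᴴ * nv t - nv t * ξᴴ))ᴴ * v t)
        + Matrix.trace ((nv t)ᴴ * ((H (v t))ᴴ + (ξ * v t - v t * ξ))))
      = -(2 * Complex.I * ((Matrix.trace (nv t * H (v t))).im : ℂ)) := by
    intro t
    set n := nv t with hnn
    set w := v t with hww
    have hc1 : (-(HT n)ᴴ - (ξᴴ * n - n * ξᴴ))ᴴ = -(HT n) - (nᴴ * ξ - ξ * nᴴ) := by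
      simp [Matrix.conjTranspose_sub, Matrix.conjTranspose_neg, Matrix.conjTranspose_mul]
    rw [hc1, Matrix.sub_mul, Matrix.neg_mul, Matrix.sub_mul, Matrix.mul_add, Matrix.mul_sub,
      Matrix.trace_sub, Matrix.trace_neg, Matrix.trace_sub, Matrix.trace_add, Matrix.trace_sub]
    have hcyc : Matrix.trace (ξ * nᴴ * w) = Matrix.trace (nᴴ * (w * ξ)) := by
      rw [Matrix.mul_assoc, Matrix.trace_mul_comm, Matrix.mul_assoc]
    have hmul : Matrix.trace (nᴴ * ξ * w) = Matrix.trace (nᴴ * (ξ * w)) := by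
      rw [Matrix.mul_assoc]
    have h1 : Matrix.trace (nᴴ * (H w)ᴴ) = star (Matrix.trace (n * H w)) := by
      have e : nᴴ * (H w)ᴴ = (H w * n)ᴴ := (Matrix.conjTranspose_mul _ _).symm
      rw [e, Matrix.trace_conjTranspose, Matrix.trace_mul_comm]
    have h2 : Matrix.trace (HT n * w) = Matrix.trace (n * H w) := htrans n w
    rw [hcyc, hmul, h1, h2]
    have := Stmt7Aux.star_sub_self (Matrix.trace (n * H w))
    linear_combination this
  have hfirst : ∀ t, HasDerivAt (fun t => Matrix.trace ((nv t)ᴴ * v t))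
      (-(2 * Complex.I * ((Matrix.trace (nv t * H (v t))).im : ℂ))) t := by
    intro t
    have := key t
    rwa [heq t] at this
  refine ⟨hfirst, fun h0 t => ?_⟩
  have hg : ∀ s, HasDerivAt (fun s => (Matrix.trace ((nv s)ᴴ * v s)).re) 0 s := by
    intro s
    have := Complex.reCLM.hasFDerivAt.comp_hasDerivAt s (hfirst s)
    simp at this
    exact this
  have hconst := is_const_of_deriv_eq_zero
    (f := fun s => (Matrix.trace ((nv s)ᴴ * v s)).re)
    (fun s => (hg s).differentiableAt) (fun s => (hg s).deriv) t 0
  rw [hconst, h0]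
end
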